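/- arXiv:2408.09573 — 2 statements merged into one kernel-verified Lean document; each statement's English description precedes it below -/
import Mathlib

section
/- Let a > 0 and 0 < m < M < ∞. Then there exists a constant C > 0, depending only on m, M and a, such that for every D ∈ Sym3 with (M+m)/2 ≤ |D| < M and every E ∈ Sym3, one has |L(D,E)|² ≤ C (1 + |S(D)|^a)^{1+1/a} Q(D,E). -/
noncomputable section

/-- Frobenius inner product on 3×3 real matrices: `A·B = Σ_{i,j} A_{ij} B_{ij}`. -/
def mdot (A B : Matrix (Fin 3) (Fin 3) ℝ) : ℝ := ∑ i, ∑ j, A i j * B i j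

/-- Frobenius norm `|A| = (A·A)^{1/2}`. -/
def mnorm (A : Matrix (Fin 3) (Fin 3) ℝ) : ℝ := Real.sqrt (mdot A A)

/-- The constitutive map `S(D) = (|D|−m)_+ (M^a − |D|^a)^{−1/a} D/|D|`, with `S(0) = 0`. -/
def Smap (a m M : ℝ) (D : Matrix (Fin 3) (Fin 3) ℝ) : Matrix (Fin 3) (Fin 3) ℝ :=
  ((max (mnorm D - m) 0) * (M ^ a - mnorm D ^ a) ^ (-1/a) / mnorm D) • D

/-- `L(D,E) = (|D|−m)(M^a−|D|^a)^{−1/a}E/|D|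
      + ((|D|−m)|D|^a + m(M^a−|D|^a))(M^a−|D|^a)^{−1−1/a}|D|^{−3}(D·E)D`. -/
def Lmap (a m M : ℝ) (D E : Matrix (Fin 3) (Fin 3) ℝ) : Matrix (Fin 3) (Fin 3) ℝ :=
  ((mnorm D - m) * (M ^ a - mnorm D ^ a) ^ (-1/a) / mnorm D) • E +
    (((mnorm D - m) * mnorm D ^ a + m * (M ^ a - mnorm D ^ a)) *
      (M ^ a - mnorm D ^ a) ^ (-1 - 1/a) * mdot D E / mnorm D ^ 3) • D

/-- `Q(D,E) = (|D|−m)(M^a−|D|^a)^{−1/a}|E|²/|D|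
      + ((|D|−m)|D|^a + m(M^a−|D|^a))(M^a−|D|^a)^{−1−1/a}|D|^{−3}(D·E)²`. -/
def Qmap (a m M : ℝ) (D E : Matrix (Fin 3) (Fin 3) ℝ) : ℝ :=
  (mnorm D - m) * (M ^ a - mnorm D ^ a) ^ (-1/a) * mnorm E ^ 2 / mnorm D +
    ((mnorm D - m) * mnorm D ^ a + m * (M ^ a - mnorm D ^ a)) *
      (M ^ a - mnorm D ^ a) ^ (-1 - 1/a) * (mdot D E) ^ 2 / mnorm D ^ 3

lemma mdot_self_nonneg (A : Matrix (Fin 3) (Fin 3) ℝ) : 0 ≤ mdot A A :=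
  Finset.sum_nonneg fun i _ => Finset.sum_nonneg fun j _ => mul_self_nonneg _

lemma mnorm_sq (A : Matrix (Fin 3) (Fin 3) ℝ) : mnorm A ^ 2 = mdot A A :=
  Real.sq_sqrt (mdot_self_nonneg A)

lemma mnorm_smul (c : ℝ) (A : Matrix (Fin 3) (Fin 3) ℝ) (hc : 0 ≤ c) :
    mnorm (c • A) = c * mnorm A := by
  unfold mnorm mdot
  simp only [Matrix.smul_apply, smul_eq_mul]
  rw [show ∑ i, ∑ j, (c * A i j) * (c * A i j) = c^2 * ∑ i, ∑ j, A i j * A i j by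
    rw [Finset.mul_sum]
    refine Finset.sum_congr rfl fun i _ => ?_
    rw [Finset.mul_sum]
    exact Finset.sum_congr rfl fun j _ => by ring]
  rw [Real.sqrt_mul (sq_nonneg c), Real.sqrt_sq hc]

lemma mdot_expand (c d : ℝ) (D E : Matrix (Fin 3) (Fin 3) ℝ) :
    mdot (c • E + d • D) (c • E + d • D)
      = c^2 * mdot E E + 2*c*d * mdot D E + d^2 * mdot D D := by
  simp only [mdot, Matrix.add_apply, Matrix.smul_apply, smul_eq_mul, Fin.sum_univ_succ,
    Fin.sum_univ_zero]
  ring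


lemma scalar_ineq (a m M r AA P : ℝ) (ha : 0 < a) (hm : 0 < m) (hmM : m < M)
    (hAA : 0 ≤ AA) (hlow : (M + m)/2 ≤ r) (hhi : r < M) :
    ((r - m) * (M ^ a - r ^ a) ^ (-1/a) / r)^2 * AA
      + 2 * ((r - m) * (M ^ a - r ^ a) ^ (-1/a) / r)
          * (((r - m) * r ^ a + m * (M ^ a - r ^ a)) * (M ^ a - r ^ a) ^ (-1 - 1/a) * P / r ^ 3) * P
      + (((r - m) * r ^ a + m * (M ^ a - r ^ a)) * (M ^ a - r ^ a) ^ (-1 - 1/a) * P / r ^ 3)^2 * r ^ 2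
    ≤ ((2*(M * M ^ a / m) + (M * M ^ a + m * M ^ a)/m) / ((M - m)/2) ^ (a+1))
        * (1 + ((r - m) * (M ^ a - r ^ a) ^ (-1/a)) ^ a) ^ (1 + 1/a)
        * ((r - m) * (M ^ a - r ^ a) ^ (-1/a) * AA / r
           + ((r - m) * r ^ a + m * (M ^ a - r ^ a)) * (M ^ a - r ^ a) ^ (-1 - 1/a) * P ^ 2 / r ^ 3) := by
  have hM0 : 0 < M := hm.trans hmM
  have hMa : 0 < M ^ a := Real.rpow_pos_of_pos hM0 a
  have hr0 : 0 < r := lt_of_lt_of_le (by linarith) hlow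
  have hrm : m < r := lt_of_lt_of_le (by linarith) hlow
  have hrm' : (0:ℝ) ≤ r - m := by linarith
  have hra : r ^ a < M ^ a := Real.rpow_lt_rpow hr0.le hhi ha
  have hra0 : 0 < r ^ a := Real.rpow_pos_of_pos hr0 a
  set t : ℝ := M ^ a - r ^ a with hts
  have ht : 0 < t := by rw [hts]; linarith
  have htM : t ≤ M ^ a := by rw [hts]; linarith
  set u : ℝ := t ^ (-1 - 1/a) with hus
  have hu : 0 < u := Real.rpow_pos_of_pos ht _
  set v : ℝ := t ^ (-1/a) with hvs
  have hv : 0 < v := Real.rpow_pos_of_pos ht _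
  have hvu : v = t * u := by
    rw [hvs, hus, show (-1/a : ℝ) = 1 + (-1 - 1/a) by ring, Real.rpow_add ht, Real.rpow_one]
  set α : ℝ := (r - m) * v / r with hαs
  set g : ℝ := (r - m) * r ^ a + m * t with hgs
  set K : ℝ := 2*(M * M ^ a / m) + (M * M ^ a + m * M ^ a)/m with hKs
  set c0 : ℝ := ((M - m)/2) ^ (a+1) with hc0s
  have hK0 : 0 < K := by rw [hKs]; positivity
  have hc00 : 0 < c0 := Real.rpow_pos_of_pos (by linarith) _
  have hα0 : 0 ≤ α := by
    rw [hαs]; exact div_nonneg (mul_nonneg hrm' hv.le) hr0.le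
  have hg0 : 0 ≤ g := by
    rw [hgs]; exact add_nonneg (mul_nonneg hrm' hra0.le) (mul_nonneg hm.le ht.le)
  have h_alpha : α ≤ (M * M ^ a / m) * u := by
    have h6 : (r - m) * t ≤ M * M ^ a := mul_le_mul (by linarith) htM ht.le hM0.le
    have h7 : (r - m) * t / r ≤ M * M ^ a / m := div_le_div₀ (by positivity) h6 hm hrm.le
    calc α = ((r - m) * t / r) * u := by rw [hαs, hvu]; ring
    _ ≤ (M * M ^ a / m) * u := mul_le_mul_of_nonneg_right h7 hu.le
  have h_beta : g / r ≤ (M * M ^ a + m * M ^ a)/m := by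
    have h8 : g ≤ M * M ^ a + m * M ^ a := by
      have h81 : (r - m) * r ^ a ≤ M * M ^ a := mul_le_mul (by linarith) hra.le hra0.le hM0.le
      have h82 : m * t ≤ m * M ^ a := mul_le_mul_of_nonneg_left htM hm.le
      rw [hgs]; linarith
    exact div_le_div₀ (by positivity) h8 hm hrm.le
  have hKey1 : α ≤ K * u := by
    refine h_alpha.trans (mul_le_mul_of_nonneg_right ?_ hu.le)
    rw [hKs]; have : 0 < (M * M ^ a + m * M ^ a)/m := by positivity
    nlinarith [div_pos (mul_pos hM0 hMa) hm]
  have hKey2 : 2*α + g*u/r ≤ K * u := by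
    have h9 : g*u/r = (g/r)*u := by ring
    have h10 : (g/r)*u ≤ ((M * M ^ a + m * M ^ a)/m)*u := mul_le_mul_of_nonneg_right h_beta hu.le
    rw [h9, hKs]; linarith
  have hT1nn : 0 ≤ α * AA := mul_nonneg hα0 hAA
  have hT2nn : 0 ≤ g*u*P^2/r^3 :=
    div_nonneg (mul_nonneg (mul_nonneg hg0 hu.le) (sq_nonneg P)) (by positivity)
  have hstep1 : α^2*AA + 2*α*(g*u*P/r^3)*P + (g*u*P/r^3)^2*r^2
      ≤ K*u*(α*AA + g*u*P^2/r^3) := by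
    have e : α^2*AA + 2*α*(g*u*P/r^3)*P + (g*u*P/r^3)^2*r^2
        = α*(α*AA) + (2*α + g*u/r)*(g*u*P^2/r^3) := by
      field_simp
      ring
    rw [e]
    calc α*(α*AA) + (2*α + g*u/r)*(g*u*P^2/r^3)
        ≤ (K*u)*(α*AA) + (K*u)*(g*u*P^2/r^3) :=
          add_le_add (mul_le_mul_of_nonneg_right hKey1 hT1nn)
            (mul_le_mul_of_nonneg_right hKey2 hT2nn)
      _ = K*u*(α*AA + g*u*P^2/r^3) := by ring
  have hS : ((r - m) * v) ^ a = (r - m)^a * t^(-1:ℝ) := by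
    rw [hvs, Real.mul_rpow hrm' (Real.rpow_nonneg ht.le _), ← Real.rpow_mul ht.le]
    congr 2
    field_simp
  have hpow : c0 * u ≤ (1 + ((r - m) * v) ^ a) ^ (1 + 1/a) := by
    have hx : (r - m)^a * t^(-1:ℝ) ≤ 1 + ((r - m) * v) ^ a := by
      rw [hS]; linarith
    have h1 : ((r - m)^a * t^(-1:ℝ))^(1+1/a) ≤ (1 + ((r - m) * v) ^ a)^(1+1/a) :=
      Real.rpow_le_rpow (by positivity) hx (by positivity)
    have h2 : ((r - m)^a * t^(-1:ℝ))^(1+1/a) = (r - m)^(a+1) * u := by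
      rw [Real.mul_rpow (by positivity) (by positivity), ← Real.rpow_mul hrm',
        ← Real.rpow_mul ht.le, hus]
      congr 2
      · field_simp
      · ring
    have h3 : c0 ≤ (r - m)^(a+1) := by
      rw [hc0s]
      exact Real.rpow_le_rpow (by linarith) (by linarith) (by positivity)
    calc c0 * u ≤ (r - m)^(a+1) * u := mul_le_mul_of_nonneg_right h3 hu.le
      _ = ((r - m)^a * t^(-1:ℝ))^(1+1/a) := h2.symm
      _ ≤ _ := h1
  have hKC : K * u ≤ K/c0 * (1 + ((r - m) * v) ^ a)^(1+1/a) := by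
    have h11 := mul_le_mul_of_nonneg_left hpow (le_of_lt (div_pos hK0 hc00))
    calc K*u = K/c0 * (c0*u) := by field_simp
      _ ≤ _ := h11
  have hQeq : (r - m) * v * AA / r = α * AA := by rw [hαs]; ring
  rw [hQeq]
  calc α^2*AA + 2*α*(g*u*P/r^3)*P + (g*u*P/r^3)^2*r^2
      ≤ K*u*(α*AA + g*u*P^2/r^3) := hstep1
    _ ≤ (K/c0 * (1 + ((r - m) * v) ^ a)^(1+1/a)) * (α*AA + g*u*P^2/r^3) :=
        mul_le_mul_of_nonneg_right hKC (add_nonneg hT1nn hT2nn)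
    _ = K/c0 * (1 + ((r - m) * v) ^ a)^(1+1/a) * (α*AA + g*u*P^2/r^3) := by ring

/-- There is `C = C(m,M,a) > 0` such that for all symmetric `D, E` with
`(M+m)/2 ≤ |D| < M`: `|L(D,E)|² ≤ C (1 + |S(D)|^a)^{1+1/a} Q(D,E)`. -/
theorem Lmap_sq_le_Smap (a m M : ℝ) (ha : 0 < a) (hm : 0 < m) (hmM : m < M) :
    ∃ C : ℝ, 0 < C ∧ ∀ D E : Matrix (Fin 3) (Fin 3) ℝ, D.IsSymm → E.IsSymm →
      (M + m)/2 ≤ mnorm D → mnorm D < M →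
      mnorm (Lmap a m M D E) ^ 2 ≤
        C * (1 + mnorm (Smap a m M D) ^ a) ^ (1 + 1/a) * Qmap a m M D E := by
  have hM0 : 0 < M := hm.trans hmM
  refine ⟨(2*(M * M ^ a / m) + (M * M ^ a + m * M ^ a)/m) / ((M - m)/2) ^ (a+1), ?_, ?_⟩
  · have h1 : 0 < M ^ a := Real.rpow_pos_of_pos hM0 a
    have h2 : (0:ℝ) < ((M - m)/2) ^ (a+1) := Real.rpow_pos_of_pos (by linarith) _
    positivity
  · intro D E _ _ hlow hhi
    have hr0 : 0 < mnorm D := lt_of_lt_of_le (by linarith) hlow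
    have hrm : m < mnorm D := lt_of_lt_of_le (by linarith) hlow
    have ht : 0 < M ^ a - mnorm D ^ a := by
      have := Real.rpow_lt_rpow (Real.sqrt_nonneg _) hhi ha
      unfold mnorm at *
      linarith
    have hcoef : 0 ≤ (max (mnorm D - m) 0) * (M ^ a - mnorm D ^ a) ^ (-1/a) / mnorm D :=
      div_nonneg (mul_nonneg (le_max_right _ _) (Real.rpow_nonneg ht.le _)) hr0.le
    have hSn : mnorm (Smap a m M D) = (mnorm D - m) * (M ^ a - mnorm D ^ a) ^ (-1/a) := by
      unfold Smap
      rw [mnorm_smul _ _ hcoef, max_eq_left (by linarith : (0:ℝ) ≤ mnorm D - m)]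
      field_simp
    rw [hSn]
    refine le_of_eq_of_le ?_
      (scalar_ineq a m M (mnorm D) (mnorm E ^ 2) (mdot D E) ha hm hmM (by positivity) hlow hhi)
    unfold Lmap
    rw [mnorm_sq, mdot_expand, ← mnorm_sq E, ← mnorm_sq D]
end
end

section
/- Let a > 0 and 0 < m < M < ∞, let (X, 𝒜, μ) be a finite measure space, let H : X → Sym3 be measurable with |H(x)| < M for μ-a.e. x, and let G : X → Sym3 be Bochner integrable. Assume that x ↦ S(H(x)) is Bochner integrable, and that for every measurable B : X → Sym3 with |B(x)| < M for μ-a.e. x and with x ↦ S(B(x)) Bochner integrable, one has ∫_X (G(x) − S(B(x))) · (H(x) − B(x)) dμ(x) ≥ 0. Then G(x) = S(H(x)) for μ-a.e. x ∈ X. -/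
open MeasureTheory

noncomputable section

attribute [local instance]
  Matrix.frobeniusSeminormedAddCommGroup Matrix.frobeniusNormedAddCommGroup
  Matrix.frobeniusNormedSpace

/-- The Frobenius `ContinuousENorm` (now required by `Integrable`), built from the Frobenius seminormed group. -/
def frobeniusContinuousENorm : ContinuousENorm (Matrix (Fin 3) (Fin 3) ℝ) :=
  @SeminormedAddGroup.toContinuousENorm _
    (Matrix.frobeniusSeminormedAddCommGroup).toSeminormedAddGroup

attribute [local instance] frobeniusContinuousENorm

/-- The constitutive map `S(D) = (|D|−m)_+ (M^a − |D|^a)^{−1/a} D/|D|` for `|D| < M`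
(with `S(0) = 0`), extended by `S(D) = 0` for `|D| ≥ M`. -/
def SmapExt (a m M : ℝ) (D : Matrix (Fin 3) (Fin 3) ℝ) : Matrix (Fin 3) (Fin 3) ℝ :=
  if mnorm D < M then
    ((max (mnorm D - m) 0) * (M ^ a - mnorm D ^ a) ^ (-1/a) / mnorm D) • D
  else 0

open Matrix

local notation "𝕄" => Matrix (Fin 3) (Fin 3) ℝ

lemma mnorm_eq (A : 𝕄) : mnorm A = ‖A‖ := by
  rw [Matrix.frobenius_norm_def, mnorm, mdot, Real.sqrt_eq_rpow]
  congr 1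
  simp [Real.norm_eq_abs, sq_abs, sq]

lemma mdot_comm (A B : 𝕄) : mdot A B = mdot B A := by
  simp [mdot, mul_comm]

lemma mdot_nonneg_self (A : 𝕄) : 0 ≤ mdot A A :=
  Finset.sum_nonneg fun i _ => Finset.sum_nonneg fun j _ => mul_self_nonneg _

lemma mdot_self (A : 𝕄) : mdot A A = ‖A‖ ^ 2 := by
  rw [← mnorm_eq, mnorm, Real.sq_sqrt (mdot_nonneg_self A)]

lemma mdot_smul_right (c : ℝ) (A B : 𝕄) : mdot A (c • B) = c * mdot A B := by
  simp only [mdot, Matrix.smul_apply, smul_eq_mul, Finset.mul_sum]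
  congr 1; ext i; congr 1; ext j; ring

lemma mdot_neg_right (A B : 𝕄) : mdot A (-B) = -mdot A B := by
  simp [mdot]

lemma mdot_prod (A B : 𝕄) : mdot A B = ∑ p : Fin 3 × Fin 3, A p.1 p.2 * B p.1 p.2 := by
  rw [mdot, Fintype.sum_prod_type]

lemma abs_mdot_le (A B : 𝕄) : |mdot A B| ≤ ‖A‖ * ‖B‖ := by
  have h1 : (mdot A B) ^ 2 ≤ (‖A‖ * ‖B‖) ^ 2 := by
    rw [mul_pow, ← mdot_self, ← mdot_self, mdot_prod, mdot_prod, mdot_prod]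
    simpa [sq] using Finset.sum_mul_sq_le_sq_mul_sq Finset.univ (fun p : Fin 3 × Fin 3 => A p.1 p.2) (fun p => B p.1 p.2)
  have h2 := Real.sqrt_le_sqrt h1
  rwa [Real.sqrt_sq_eq_abs, Real.sqrt_sq (by positivity)] at h2

lemma SmapExt_def' (a m M : ℝ) (D : 𝕄) :
    SmapExt a m M D =
      if ‖D‖ < M then ((max (‖D‖ - m) 0) * (M ^ a - ‖D‖ ^ a) ^ (-1/a) / ‖D‖) • D else 0 := by
  rw [SmapExt, mnorm_eq]

lemma SmapExt_isSymm (a m M : ℝ) {D : 𝕄} (hD : D.IsSymm) : (SmapExt a m M D).IsSymm := by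
  rw [SmapExt]
  split
  · exact hD.smul _
  · exact Matrix.isSymm_zero

lemma neg_div_nonpos {a : ℝ} (ha : 0 < a) : -1/a ≤ 0 := by
  rw [neg_div]
  exact neg_nonpos.mpr (by positivity)

lemma SmapExt_norm_le {a m M : ℝ} (ha : 0 < a) (hm : 0 < m) {D : 𝕄} {r : ℝ}
    (hD : ‖D‖ ≤ r) (hr : r < M) :
    ‖SmapExt a m M D‖ ≤ M * (M ^ a - r ^ a) ^ (-1/a) := by
  have hDn : (0:ℝ) ≤ ‖D‖ := norm_nonneg D
  have hr0 : 0 ≤ r := le_trans hDn hD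
  have hM0 : 0 < M := lt_of_le_of_lt hr0 hr
  have hbr : 0 < M ^ a - r ^ a := sub_pos.mpr (Real.rpow_lt_rpow hr0 hr ha)
  have hbD : M ^ a - r ^ a ≤ M ^ a - ‖D‖ ^ a := by
    have := Real.rpow_le_rpow hDn hD ha.le
    linarith
  have hDM : ‖D‖ < M := lt_of_le_of_lt hD hr
  have hb0 : 0 < M ^ a - ‖D‖ ^ a := lt_of_lt_of_le hbr hbD
  rw [SmapExt_def', if_pos hDM, norm_smul]
  have h1 : 0 ≤ (M ^ a - ‖D‖ ^ a) ^ (-1/a) := Real.rpow_nonneg hb0.le _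
  have hc : 0 ≤ max (‖D‖ - m) 0 * (M ^ a - ‖D‖ ^ a) ^ (-1/a) / ‖D‖ :=
    div_nonneg (mul_nonneg (le_max_right _ _) h1) hDn
  rw [Real.norm_eq_abs, abs_of_nonneg hc]
  have hdm : max (‖D‖ - m) 0 * (M ^ a - ‖D‖ ^ a) ^ (-1/a) / ‖D‖ * ‖D‖
      ≤ max (‖D‖ - m) 0 * (M ^ a - ‖D‖ ^ a) ^ (-1/a) := by
    rcases eq_or_lt_of_le hDn with h0 | h0
    · rw [← h0, mul_zero]
      have hz : (0:ℝ) ^ a = 0 := Real.zero_rpow (ne_of_gt ha)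
      rw [hz, sub_zero]
      exact mul_nonneg (le_max_right _ _)
        (Real.rpow_nonneg (Real.rpow_nonneg hM0.le a) _)
    · rw [div_mul_cancel₀ _ (ne_of_gt h0)]
  refine le_trans hdm ?_
  have hmaxM : max (‖D‖ - m) 0 ≤ M := max_le (by linarith) hM0.le
  have hrpow : (M ^ a - ‖D‖ ^ a) ^ (-1/a) ≤ (M ^ a - r ^ a) ^ (-1/a) :=
    Real.rpow_le_rpow_of_nonpos hbr hbD (neg_div_nonpos ha)
  exact mul_le_mul hmaxM hrpow h1 hM0.le

lemma SmapExt_continuousAt {a m M : ℝ} (ha : 0 < a) (hm : 0 < m) (hmM : m < M)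
    {D₀ : 𝕄} (hD₀ : ‖D₀‖ < M) : ContinuousAt (SmapExt a m M) D₀ := by
  have hU : ∀ᶠ D in nhds D₀, ‖D‖ < M :=
    (continuous_norm.continuousAt (x := D₀)).eventually_lt continuousAt_const hD₀
  rcases lt_or_ge ‖D₀‖ m with hcase | hcase
  · have hUm : ∀ᶠ D in nhds D₀, ‖D‖ < m :=
      (continuous_norm.continuousAt (x := D₀)).eventually_lt continuousAt_const hcase
    have heq : (SmapExt a m M) =ᶠ[nhds D₀] fun _ => (0 : 𝕄) := by
      filter_upwards [hU, hUm] with D h1 h2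
      rw [SmapExt_def', if_pos h1, max_eq_right (by linarith), zero_mul, zero_div, zero_smul]
    exact (continuousAt_congr heq).mpr continuousAt_const
  · have hpos : 0 < ‖D₀‖ := lt_of_lt_of_le hm hcase
    have hb0 : 0 < M ^ a - ‖D₀‖ ^ a :=
      sub_pos.mpr (Real.rpow_lt_rpow (norm_nonneg _) hD₀ ha)
    have cn : ContinuousAt (fun D : 𝕄 => ‖D‖) D₀ := continuous_norm.continuousAt
    have cpa : ContinuousAt (fun D : 𝕄 => M ^ a - ‖D‖ ^ a) D₀ :=
      continuousAt_const.sub (cn.rpow_const (Or.inr ha.le))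
    have crp : ContinuousAt (fun D : 𝕄 => (M ^ a - ‖D‖ ^ a) ^ (-1/a)) D₀ :=
      cpa.rpow_const (Or.inl (ne_of_gt hb0))
    have cmax : ContinuousAt (fun D : 𝕄 => max (‖D‖ - m) 0) D₀ :=
      (cn.sub continuousAt_const).max continuousAt_const
    have csc : ContinuousAt
        (fun D : 𝕄 => max (‖D‖ - m) 0 * (M ^ a - ‖D‖ ^ a) ^ (-1/a) / ‖D‖) D₀ :=
      (cmax.mul crp).div cn (ne_of_gt hpos)
    have cg : ContinuousAt
        (fun D : 𝕄 => (max (‖D‖ - m) 0 * (M ^ a - ‖D‖ ^ a) ^ (-1/a) / ‖D‖) • D) D₀ :=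
      csc.smul continuousAt_id
    have heq : (SmapExt a m M) =ᶠ[nhds D₀]
        fun D : 𝕄 => (max (‖D‖ - m) 0 * (M ^ a - ‖D‖ ^ a) ^ (-1/a) / ‖D‖) • D := by
      filter_upwards [hU] with D h1
      rw [SmapExt_def', if_pos h1]
    exact (continuousAt_congr heq).mpr cg

lemma stronglyMeasurable_SmapExt_comp {X : Type*} [MeasurableSpace X] (a m M : ℝ)
    {B : X → 𝕄} (hB : StronglyMeasurable B) :
    StronglyMeasurable fun x => SmapExt a m M (B x) := by
  have hn : Measurable fun x => ‖B x‖ :=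
    (continuous_norm.comp_stronglyMeasurable hB).measurable
  have hset : MeasurableSet {x | ‖B x‖ < M} := measurableSet_lt hn measurable_const
  have hrp : Measurable fun x : X => (M ^ a - ‖B x‖ ^ a) ^ (-1/a) := by
    have h1 : Measurable fun t : ℝ => (M ^ a - t ^ a) ^ (-1/a) := by measurability
    exact h1.comp hn
  have hsc : Measurable fun x => max (‖B x‖ - m) 0 * (M ^ a - ‖B x‖ ^ a) ^ (-1/a) / ‖B x‖ :=
    (((hn.sub measurable_const).max measurable_const).mul hrp).div hn
  have hsm : StronglyMeasurable fun x =>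
      (max (‖B x‖ - m) 0 * (M ^ a - ‖B x‖ ^ a) ^ (-1/a) / ‖B x‖) • B x :=
    hsc.stronglyMeasurable.smul hB
  have : (fun x => SmapExt a m M (B x)) = fun x =>
      if ‖B x‖ < M then (max (‖B x‖ - m) 0 * (M ^ a - ‖B x‖ ^ a) ^ (-1/a) / ‖B x‖) • B x
      else 0 := by
    funext x
    rw [SmapExt_def']
  rw [this]
  exact StronglyMeasurable.ite hset hsm stronglyMeasurable_const

lemma continuous_entry (i j : Fin 3) : Continuous fun A : 𝕄 => A i j :=
  LinearMap.continuous_of_finiteDimensional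
    ({ toFun := fun A : 𝕄 => A i j
       map_add' := fun _ _ => rfl
       map_smul' := fun c A => by simp [Matrix.smul_apply] } : 𝕄 →ₗ[ℝ] ℝ)

lemma continuous_transpose : Continuous fun A : 𝕄 => Aᵀ :=
  LinearMap.continuous_of_finiteDimensional
    ((Matrix.transposeLinearEquiv (Fin 3) (Fin 3) ℝ ℝ).toLinearMap)

lemma continuous_mdot_right (B : 𝕄) : Continuous fun A : 𝕄 => mdot A B := by
  unfold mdot
  exact continuous_finset_sum _ fun i _ => continuous_finset_sum _ fun j _ =>
    ((continuous_entry i j).mul continuous_const)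

lemma aesm_mdot {X : Type*} [MeasurableSpace X] {μ : Measure X} {P Q : X → 𝕄}
    (hP : AEStronglyMeasurable P μ) (hQ : AEStronglyMeasurable Q μ) :
    AEStronglyMeasurable (fun x => mdot (P x) (Q x)) μ := by
  unfold mdot
  apply Finset.aestronglyMeasurable_fun_sum
  intro i _
  apply Finset.aestronglyMeasurable_fun_sum
  intro j _
  exact ((continuous_entry i j).comp_aestronglyMeasurable hP).mul
    ((continuous_entry i j).comp_aestronglyMeasurable hQ)

lemma mdot_zero_right (A : 𝕄) : mdot A 0 = 0 := by simp [mdot]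

/-- Minty-type identification: if `G` satisfies
`∫ (G − S(B)) · (H − B) dμ ≥ 0` for all admissible symmetric `B` with `|B| < M` a.e.
(and `S∘B` Bochner integrable), then `G = S(H)` a.e. -/
theorem minty_identification (a m M : ℝ) (ha : 0 < a) (hm : 0 < m) (hmM : m < M)
    {X : Type*} [MeasurableSpace X] (μ : Measure X) [IsFiniteMeasure μ]
    (H G : X → Matrix (Fin 3) (Fin 3) ℝ)
    (hHsym : ∀ x, (H x).IsSymm) (hHmeas : StronglyMeasurable H)
    (hHlt : ∀ᵐ x ∂μ, mnorm (H x) < M)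
    (hGsym : ∀ x, (G x).IsSymm) (hGint : Integrable G μ)
    (hSHint : Integrable (fun x => SmapExt a m M (H x)) μ)
    (hmono : ∀ B : X → Matrix (Fin 3) (Fin 3) ℝ, StronglyMeasurable B →
      (∀ x, (B x).IsSymm) → (∀ᵐ x ∂μ, mnorm (B x) < M) →
      Integrable (fun x => SmapExt a m M (B x)) μ →
      0 ≤ ∫ x, mdot (G x - SmapExt a m M (B x)) (H x - B x) ∂μ) :
    ∀ᵐ x ∂μ, G x = SmapExt a m M (H x) := by
  classical
  have hM0 : 0 < M := lt_trans hm hmM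
  have hHlt' : ∀ᵐ x ∂μ, ‖H x‖ < M := by
    filter_upwards [hHlt] with x hx; rwa [mnorm_eq] at hx
  set SH : X → 𝕄 := fun x => SmapExt a m M (H x) with hSHdef
  have hSHsm : StronglyMeasurable SH := stronglyMeasurable_SmapExt_comp a m M hHmeas
  set F : X → 𝕄 := fun x => G x - SH x with hFdef
  have hFint : Integrable F μ := hGint.sub hSHint
  have hFsymm : ∀ x, (F x).IsSymm :=
    fun x => (hGsym x).sub (SmapExt_isSymm a m M (hHsym x))
  -- strongly measurable symmetric version of F
  set G' : X → 𝕄 := hGint.1.mk G with hG'def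
  have hG'sm : StronglyMeasurable G' := hGint.1.stronglyMeasurable_mk
  have hGG' : G =ᵐ[μ] G' := hGint.1.ae_eq_mk
  set F₀ : X → 𝕄 := fun x => G' x - SH x with hF₀def
  have hF₀sm : StronglyMeasurable F₀ := hG'sm.sub hSHsm
  set Fs : X → 𝕄 := fun x => (2⁻¹ : ℝ) • (F₀ x + (F₀ x)ᵀ) with hFsdef
  have hFssm : StronglyMeasurable Fs :=
    (stronglyMeasurable_const (b := (2⁻¹ : ℝ))).smul
      (hF₀sm.add (continuous_transpose.comp_stronglyMeasurable hF₀sm))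
  have hFssymm : ∀ x, (Fs x).IsSymm := by
    intro x
    show ((2⁻¹ : ℝ) • (F₀ x + (F₀ x)ᵀ))ᵀ = _
    rw [Matrix.transpose_smul, Matrix.transpose_add, Matrix.transpose_transpose, add_comm]
  have hFsF : ∀ᵐ x ∂μ, Fs x = F x := by
    filter_upwards [hGG'] with x hx
    have hF₀ : F₀ x = F x := by rw [hF₀def, hFdef]; simp [← hx]
    have hsym : (F x)ᵀ = F x := hFsymm x
    rw [hFsdef]
    simp only [hF₀, hsym]
    rw [← two_smul ℝ (F x), smul_smul]
    norm_num
  -- unit direction field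
  set v : X → 𝕄 := fun x => (‖Fs x‖)⁻¹ • Fs x with hvdef
  have hvsm : StronglyMeasurable v :=
    ((continuous_norm.comp_stronglyMeasurable hFssm).measurable.inv).stronglyMeasurable.smul hFssm
  have hvsymm : ∀ x, (v x).IsSymm := fun x => (hFssymm x).smul _
  have hvnorm : ∀ x, ‖v x‖ ≤ 1 := by
    intro x
    rw [hvdef]
    rcases eq_or_ne (Fs x) 0 with h0 | h0
    · simp [h0]
    · rw [norm_smul, Real.norm_eq_abs, abs_of_nonneg (inv_nonneg.mpr (norm_nonneg _)),
        inv_mul_cancel₀ (norm_ne_zero_iff.mpr h0)]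
  -- key step
  have key : ∀ ε : ℝ, 0 < ε → ε < M →
      ∀ᵐ x ∂μ, ‖H x‖ ≤ M - ε → F x = 0 := by
    intro ε hε hεM
    set δ : ℝ := ε / 2 with hδdef
    have hδ0 : 0 < δ := by positivity
    have hδM : δ < M := by rw [hδdef]; linarith
    set E : Set X := {x | ‖H x‖ ≤ M - ε} with hEdef
    have hHn : Measurable fun x => ‖H x‖ :=
      (continuous_norm.comp_stronglyMeasurable hHmeas).measurable
    have hE : MeasurableSet E := measurableSet_le hHn measurable_const
    set w : X → 𝕄 := E.indicator v with hwdef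
    have hwsm : StronglyMeasurable w := hvsm.indicator hE
    have hwsymm : ∀ x, (w x).IsSymm := by
      intro x
      rw [hwdef, Set.indicator_apply]
      split
      · exact hvsymm x
      · exact Matrix.isSymm_zero
    have hwnorm : ∀ x, ‖w x‖ ≤ 1 := by
      intro x
      rw [hwdef, Set.indicator_apply]
      split
      · exact hvnorm x
      · simp
    have hw_mem : ∀ x ∈ E, w x = v x := fun x hx => Set.indicator_of_mem hx v
    have hw_nmem : ∀ x ∉ E, w x = 0 := fun x hx => Set.indicator_of_notMem hx v
    set τ : ℕ → ℝ := fun k => δ / (k + 1) with hτdef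
    have hτpos : ∀ k, 0 < τ k := fun k => by positivity
    have hτle : ∀ k, τ k ≤ δ := by
      intro k
      rw [hτdef]
      apply div_le_self hδ0.le
      push_cast
      linarith [Nat.cast_nonneg (α := ℝ) k]
    set B : ℕ → X → 𝕄 := fun k x => H x + τ k • w x with hBdef
    have hBsm : ∀ k, StronglyMeasurable (B k) :=
      fun k => hHmeas.add ((stronglyMeasurable_const (b := τ k)).smul hwsm)
    have hBsymm : ∀ k x, (B k x).IsSymm :=
      fun k x => (hHsym x).add ((hwsymm x).smul _)
    have hBE : ∀ k, ∀ x ∈ E, ‖B k x‖ ≤ M - δ := by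
      intro k x hx
      have h1 : ‖H x‖ ≤ M - ε := hx
      calc ‖B k x‖ ≤ ‖H x‖ + ‖τ k • w x‖ := norm_add_le _ _
        _ ≤ (M - ε) + τ k * ‖w x‖ := by
            rw [norm_smul, Real.norm_eq_abs, abs_of_pos (hτpos k)]
            exact add_le_add h1 le_rfl
        _ ≤ (M - ε) + δ * 1 := by
            have := mul_le_mul (hτle k) (hwnorm x) (norm_nonneg _) hδ0.le
            linarith
        _ = M - δ := by rw [hδdef]; ring
    have hBnE : ∀ k, ∀ x ∉ E, B k x = H x := by
      intro k x hx
      simp only [hBdef, hw_nmem x hx, smul_zero, add_zero]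
    have hBlt : ∀ k, ∀ᵐ x ∂μ, mnorm (B k x) < M := by
      intro k
      filter_upwards [hHlt'] with x hx
      rw [mnorm_eq]
      by_cases hxE : x ∈ E
      · exact lt_of_le_of_lt (hBE k x hxE) (by linarith)
      · rw [hBnE k x hxE]; exact hx
    set C : ℝ := M * (M ^ a - (M - δ) ^ a) ^ (-1/a) with hCdef
    have hC0 : 0 ≤ C := by
      rw [hCdef]
      have h1 : 0 < M ^ a - (M - δ) ^ a :=
        sub_pos.mpr (Real.rpow_lt_rpow (by linarith) (by linarith) ha)
      exact mul_nonneg hM0.le (Real.rpow_nonneg h1.le _)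
    have hSB_norm : ∀ k, ∀ x ∈ E, ‖SmapExt a m M (B k x)‖ ≤ C :=
      fun k x hx => SmapExt_norm_le ha hm (hBE k x hx) (by linarith)
    have hSBsm : ∀ k, StronglyMeasurable fun x => SmapExt a m M (B k x) :=
      fun k => stronglyMeasurable_SmapExt_comp a m M (hBsm k)
    have hSBint : ∀ k, Integrable (fun x => SmapExt a m M (B k x)) μ := by
      intro k
      have hsplit : (fun x => SmapExt a m M (B k x)) =
          fun x => E.indicator (fun x => SmapExt a m M (B k x)) x + Eᶜ.indicator SH x := by
        funext x
        by_cases hxE : x ∈ E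
        · rw [Set.indicator_of_mem hxE, Set.indicator_of_notMem (by simpa using hxE),
            add_zero]
        · rw [Set.indicator_of_notMem hxE, Set.indicator_of_mem (by simpa using hxE),
            zero_add, hBnE k x hxE]
      rw [hsplit]
      have hadd : ∀ f g : X → 𝕄, Integrable f μ → Integrable g μ →
          Integrable (fun x => f x + g x) μ := fun f g hf hg => by
        have h := hf.sub hg.neg
        simp only [sub_neg_eq_add] at h
        exact h
      apply hadd
      · apply Integrable.mono' (integrable_const C)
          (((hSBsm k).indicator hE).aestronglyMeasurable)
        filter_upwards with x
        by_cases hxE : x ∈ E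
        · rw [Set.indicator_of_mem hxE]
          exact hSB_norm k x hxE
        · rw [Set.indicator_of_notMem hxE]
          simpa using hC0
      · exact hSHint.mono (hSHsm.indicator hE.compl).aestronglyMeasurable
          (ae_of_all _ fun x => norm_indicator_le_norm_self _ _)
    -- apply monotonicity
    have hIk : ∀ k, ∫ x, mdot (G x - SmapExt a m M (B k x)) (w x) ∂μ ≤ 0 := by
      intro k
      have h0 := hmono (B k) (hBsm k) (hBsymm k) (hBlt k) (hSBint k)
      have heq : ∀ x, mdot (G x - SmapExt a m M (B k x)) (H x - B k x)
          = -(τ k * mdot (G x - SmapExt a m M (B k x)) (w x)) := by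
        intro x
        have : H x - B k x = -(τ k • w x) := by simp only [hBdef]; abel
        rw [this, mdot_neg_right, mdot_smul_right]
      rw [integral_congr_ae (Filter.Eventually.of_forall heq)] at h0
      rw [integral_neg, integral_const_mul] at h0
      by_contra hcon
      push_neg at hcon
      nlinarith [hτpos k]
    -- dominated convergence
    have hTend : Filter.Tendsto
        (fun k => ∫ x, mdot (G x - SmapExt a m M (B k x)) (w x) ∂μ)
        Filter.atTop (nhds (∫ x, mdot (G x - SH x) (w x) ∂μ)) := by
      apply tendsto_integral_of_dominated_convergence (fun x => ‖G x‖ + C)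
      · intro k
        exact aesm_mdot (hGint.1.sub (hSBsm k).aestronglyMeasurable)
          hwsm.aestronglyMeasurable
      · exact hGint.norm.add (integrable_const C)
      · intro k
        filter_upwards with x
        rw [Real.norm_eq_abs]
        by_cases hxE : x ∈ E
        · calc |mdot (G x - SmapExt a m M (B k x)) (w x)|
              ≤ ‖G x - SmapExt a m M (B k x)‖ * ‖w x‖ := abs_mdot_le _ _
            _ ≤ (‖G x‖ + ‖SmapExt a m M (B k x)‖) * 1 := by
                apply mul_le_mul (norm_sub_le _ _) (hwnorm x) (norm_nonneg _)
                positivity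
            _ ≤ ‖G x‖ + C := by
                have := hSB_norm k x hxE
                linarith
        · rw [hw_nmem x hxE, mdot_zero_right, abs_zero]
          positivity
      · filter_upwards [hHlt'] with x hx
        have hτ0 : Filter.Tendsto τ Filter.atTop (nhds 0) := by
          have h1 : Filter.Tendsto (fun k : ℕ => δ * (1 / (k + 1))) Filter.atTop
              (nhds (δ * 0)) := tendsto_one_div_add_atTop_nhds_zero_nat.const_mul δ
          rw [mul_zero] at h1
          convert h1 using 2 with k
          rw [hτdef, mul_one_div]
        have hBk : Filter.Tendsto (fun k => B k x) Filter.atTop (nhds (H x)) := by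
          have h2 : Filter.Tendsto (fun k => τ k • w x) Filter.atTop (nhds ((0:ℝ) • w x)) :=
            hτ0.smul_const (w x)
          rw [zero_smul] at h2
          have h3 := (tendsto_const_nhds (x := H x) (f := Filter.atTop (α := ℕ))).add h2
          rw [add_zero] at h3
          exact h3
        have hSB : Filter.Tendsto (fun k => SmapExt a m M (B k x)) Filter.atTop
            (nhds (SmapExt a m M (H x))) :=
          ((SmapExt_continuousAt ha hm hmM hx).tendsto).comp hBk
        have cm : Continuous fun A : 𝕄 => mdot (G x - A) (w x) :=
          (continuous_mdot_right (w x)).comp (continuous_const.sub continuous_id)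
        exact (cm.continuousAt.tendsto).comp hSB
    have hI : ∫ x, mdot (G x - SH x) (w x) ∂μ ≤ 0 :=
      le_of_tendsto hTend (Filter.Eventually.of_forall hIk)
    -- identify the limit integrand
    have hφ : ∀ᵐ x ∂μ, mdot (G x - SH x) (w x) = E.indicator (fun x => ‖F x‖) x := by
      filter_upwards [hFsF] with x hx
      by_cases hxE : x ∈ E
      · rw [hw_mem x hxE, Set.indicator_of_mem hxE, hvdef]
        show mdot (F x) ((‖Fs x‖)⁻¹ • Fs x) = ‖F x‖
        rw [hx, mdot_smul_right, mdot_self]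
        rcases eq_or_ne (F x) 0 with h0 | h0
        · simp [h0]
        · rw [sq]
          rw [← mul_assoc, inv_mul_cancel₀ (norm_ne_zero_iff.mpr h0), one_mul]
      · rw [hw_nmem x hxE, Set.indicator_of_notMem hxE, mdot_zero_right]
    have hIndInt : Integrable (E.indicator fun x => ‖F x‖) μ :=
      (hFint.norm).indicator hE
    have hI0 : ∫ x, E.indicator (fun x => ‖F x‖) x ∂μ = 0 := by
      have h1 : ∫ x, E.indicator (fun x => ‖F x‖) x ∂μ ≤ 0 := by
        rw [← integral_congr_ae hφ]
        exact hI
      have h2 : 0 ≤ ∫ x, E.indicator (fun x => ‖F x‖) x ∂μ :=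
        integral_nonneg fun x => Set.indicator_nonneg (fun y _ => norm_nonneg _) x
      linarith
    have hae0 : (E.indicator fun x => ‖F x‖) =ᵐ[μ] 0 :=
      (integral_eq_zero_iff_of_nonneg
        (fun x => Set.indicator_nonneg (fun y _ => norm_nonneg _) x) hIndInt).mp hI0
    filter_upwards [hae0] with x hx hxE
    rw [Set.indicator_of_mem (show x ∈ E from hxE)] at hx
    exact norm_eq_zero.mp hx
  -- conclude
  have hkey : ∀ᵐ x ∂μ, ∀ n : ℕ, ‖H x‖ ≤ M - min (1/((n:ℝ)+1)) (M/2) → F x = 0 := by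
    rw [MeasureTheory.ae_all_iff]
    intro n
    apply key
    · have : (0:ℝ) < 1/((n:ℝ)+1) := by positivity
      exact lt_min this (by positivity)
    · exact lt_of_le_of_lt (min_le_right _ _) (by linarith)
  filter_upwards [hkey, hHlt'] with x h1 h2
  have hpos : 0 < M - ‖H x‖ := by linarith
  obtain ⟨n, hn⟩ := exists_nat_one_div_lt hpos
  have h3 : ‖H x‖ ≤ M - min (1/((n:ℝ)+1)) (M/2) := by
    have := min_le_left (1/((n:ℝ)+1)) (M/2)
    linarith
  exact sub_eq_zero.mp (h1 n h3)
end
end
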